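/- Let N ≥ 2, let (τ_1,…,τ_N; ω_1,…,ω_N) be a Radau quadrature rule of order N, and let D‡ be the associated N×N matrix with entries D‡_{ij} = -(ω_j/ω_i) D_{ji}. Then D‡ is invertible. -/

import Mathlib

open Polynomial Matrix

noncomputable section

/-- The differentiation matrix associated with nodes `σ 0, σ 1, …, σ N`
(`σ 0` being the non-collocated point):  `D i j = L̇_j(σ (i+1))`,
where `L_j` is the `j`-th Lagrange basis polynomial of the nodes. -/
def diffMat (N : ℕ) (σ : Fin (N + 1) → ℝ) : Matrix (Fin N) (Fin (N + 1)) ℝ :=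
  fun i j => (derivative (Lagrange.basis Finset.univ σ j)).eval (σ i.succ)

/-- The matrix `D‡` with entries `D‡_{ij} = -(ω_j/ω_i) D_{ji}`, the indices
`i, j` of `D` ranging over the collocation points `σ 1, …, σ N`. -/
def ddagMat (N : ℕ) (σ : Fin (N + 1) → ℝ) (ω : Fin N → ℝ) :
    Matrix (Fin N) (Fin N) ℝ :=
  fun i j => -(ω j / ω i) * diffMat N σ j i.succ

/-- For a Radau quadrature rule of order `N ≥ 2`, the matrix
`D‡` with entries `D‡_{ij} = -(ω_j/ω_i) D_{ji}` is invertible. -/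
theorem ddag_invertible (N : ℕ) (hN : 2 ≤ N) (τ ω : Fin N → ℝ)
    (hmono : StrictMono τ)
    (hfirst : -1 < τ ⟨0, by omega⟩)
    (hlast : τ ⟨N - 1, by omega⟩ = 1)
    (hω : ∀ i, 0 < ω i)
    (hquad : ∀ q : Polynomial ℝ, q.degree ≤ (2 * N - 2 : ℕ) →
      ∫ t in (-1:ℝ)..1, q.eval t = ∑ i, ω i * q.eval (τ i)) :
    IsUnit (ddagMat N (Fin.cons (-1) τ) ω) := by
  classical
  set σ : Fin (N + 1) → ℝ := Fin.cons (-1) τ with hσ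
  have hτne : ∀ i, τ i ≠ -1 := by
    intro i
    have h0 : τ ⟨0, by omega⟩ ≤ τ i := hmono.monotone (by simp [Fin.le_def])
    linarith [hfirst]
  have hinj : Function.Injective σ := by
    rw [hσ, Fin.cons_injective_iff]
    refine ⟨?_, hmono.injective⟩
    rintro ⟨i, hi⟩
    exact hτne i hi
  have hinjOn : Set.InjOn σ (Finset.univ : Finset (Fin (N + 1))) :=
    hinj.injOn
  have hωne : ∀ i, ω i ≠ 0 := fun i => (hω i).ne'
  -- The restricted differentiation matrix
  set M : Matrix (Fin N) (Fin N) ℝ := fun i j => diffMat N σ i j.succ with hM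
  -- Step 1: det M ≠ 0
  have hMdet : M.det ≠ 0 := by
    intro hdet
    obtain ⟨v, hv, hMv⟩ := (Matrix.exists_mulVec_eq_zero_iff).mpr hdet
    set p : Polynomial ℝ :=
      ∑ j : Fin N, Polynomial.C (v j) * Lagrange.basis Finset.univ σ j.succ with hp
    have hpeval : ∀ k : Fin N, p.eval (σ k.succ) = v k := by
      intro k
      rw [hp, Polynomial.eval_finset_sum]
      rw [Finset.sum_eq_single k]
      · simp [Lagrange.eval_basis_self hinjOn (Finset.mem_univ _)]
      · intro j _ hjk
        have : j.succ ≠ k.succ := fun h => hjk (Fin.succ_injective N h)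
        simp [Lagrange.eval_basis_of_ne this (Finset.mem_univ _)]
      · simp
    have hpderiv : ∀ i : Fin N, (Polynomial.derivative p).eval (σ i.succ) = 0 := by
      intro i
      have := congrFun hMv i
      simp only [Matrix.mulVec, dotProduct, Pi.zero_apply] at this
      rw [hp]
      simp only [map_sum, Polynomial.derivative_C_mul, Polynomial.eval_finset_sum,
        Polynomial.eval_mul, Polynomial.eval_C]
      rw [← this]
      refine Finset.sum_congr rfl fun j _ => ?_
      rw [hM]
      simp [diffMat, mul_comm]
    have hpdeg : p.natDegree ≤ N := by
      refine Polynomial.natDegree_sum_le_of_forall_le _ _ fun j _ => ?_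
      refine le_trans (Polynomial.natDegree_mul_le) ?_
      simp [Lagrange.natDegree_basis hinjOn (Finset.mem_univ _)]
    have hder0 : Polynomial.derivative p = 0 := by
      refine Polynomial.eq_zero_of_natDegree_lt_card_of_eval_eq_zero _
        (f := fun i : Fin N => σ i.succ) (hinj.comp (Fin.succ_injective N))
        hpderiv ?_
      have h1 : (Polynomial.derivative p).natDegree ≤ p.natDegree - 1 :=
        Polynomial.natDegree_derivative_le p
      have h2 : (Polynomial.derivative p).natDegree ≤ N - 1 :=
        le_trans h1 (Nat.sub_le_sub_right hpdeg 1)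
      simp only [Fintype.card_fin]
      omega
    have hpc : p.natDegree = 0 :=
      Polynomial.natDegree_eq_zero_of_derivative_eq_zero hder0
    obtain ⟨c, hc⟩ := Polynomial.natDegree_eq_zero.mp hpc
    have hp0 : p.eval (σ 0) = 0 := by
      rw [hp, Polynomial.eval_finset_sum]
      refine Finset.sum_eq_zero fun j _ => ?_
      have : j.succ ≠ (0 : Fin (N + 1)) := Fin.succ_ne_zero j
      simp [Lagrange.eval_basis_of_ne this (Finset.mem_univ _)]
    have hc0 : c = 0 := by
      rw [← hc] at hp0; simpa using hp0
    have hpz : p = 0 := by rw [← hc, hc0]; simp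
    apply hv
    funext k
    have := hpeval k
    rw [hpz] at this
    simpa using this.symm
  -- Step 2: relate ddagMat to M
  have hfact : ddagMat N σ ω =
      Matrix.diagonal (fun i => (ω i)⁻¹) * (-M.transpose) * Matrix.diagonal ω := by
    ext i j
    rw [Matrix.mul_diagonal, Matrix.diagonal_mul]
    simp only [ddagMat, Matrix.neg_apply, Matrix.transpose_apply, hM]
    field_simp
    show -(ω j * diffMat N σ j i.succ / ω i) = -(ω j * diffMat N σ j i.succ / ω i)
    ring
  have hdet : (ddagMat N σ ω).det ≠ 0 := by
    rw [hfact, Matrix.det_mul, Matrix.det_mul, Matrix.det_diagonal,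
      Matrix.det_diagonal, Matrix.det_neg, Matrix.det_transpose]
    refine mul_ne_zero (mul_ne_zero ?_ (mul_ne_zero ?_ hMdet)) ?_
    · exact Finset.prod_ne_zero_iff.mpr fun i _ => inv_ne_zero (hωne i)
    · exact pow_ne_zero _ (by norm_num)
    · exact Finset.prod_ne_zero_iff.mpr fun i _ => hωne i
  exact (Matrix.isUnit_iff_isUnit_det _).mpr (isUnit_iff_ne_zero.mpr hdet)
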